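/- Let G be a finite p-group in which every element of the quotient G/G^p has a lift to an element of G of order dividing p (where G^p is the subgroup generated by p-th powers of elements of G). Then G^p = 1, i.e., G has exponent dividing p. -/
import Mathlib

open Subgroup

private lemma pg_aux (p : ℕ) [Fact p.Prime] : ∀ (n : ℕ) (G : Type u) [Group G] [Finite G],
    Nat.card G ≤ n → IsPGroup p G →
    (∀ g : G, ∃ h : G, h ^ p = 1 ∧
      g⁻¹ * h ∈ Subgroup.closure {x : G | ∃ g' : G, x = g' ^ p}) →
    Subgroup.closure {x : G | ∃ g' : G, x = g' ^ p} = ⊥ := by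
  intro n
  induction n with
  | zero =>
    intro G _ _ hcard _ _
    exact absurd hcard (by simpa using Nat.card_pos.ne')
  | succ n ih =>
    intro G _ _ hcard hG hlift
    rcases subsingleton_or_nontrivial G with hs | hnt
    · exact Subsingleton.elim _ _
    -- find a central element of order p
    have hcen : IsPGroup p (Subgroup.center G) := hG.to_subgroup _
    have hntc : Nontrivial (Subgroup.center G) := hG.center_nontrivial
    obtain ⟨k, hk⟩ := hcen.exists_card_eq
    have h1 : 1 < Nat.card (Subgroup.center G) := Finite.one_lt_card
    have hpdvd : p ∣ Nat.card (Subgroup.center G) := by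
      rcases k with _ | k
      · rw [pow_zero] at hk; omega
      · exact hk ▸ dvd_pow_self p (Nat.succ_ne_zero k)
    obtain ⟨z, hz⟩ := exists_prime_orderOf_dvd_card' p hpdvd
    set Z : Subgroup G := Subgroup.zpowers (z : G) with hZdef
    have hZle : Z ≤ Subgroup.center G := by
      rw [hZdef, Subgroup.zpowers_le]
      exact z.2
    haveI : Z.Normal := by
      constructor
      intro m hm g
      have hc := Subgroup.mem_center_iff.mp (hZle hm) g
      have heq : g * m * g⁻¹ = m := by rw [hc, mul_assoc, mul_inv_cancel, mul_one]
      rw [heq]; exact hm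
    have horder : orderOf (z : G) = p := by
      rw [← hz]; exact Subgroup.orderOf_coe z
    have hcardZ : Nat.card Z = p := by
      rw [hZdef, Nat.card_zpowers, horder]
    have hZp : ∀ m ∈ Z, m ^ p = 1 := by
      intro m hm
      rw [hZdef, Subgroup.mem_zpowers_iff] at hm
      obtain ⟨j, rfl⟩ := hm
      rw [← zpow_natCast, ← zpow_mul, mul_comm, zpow_mul, zpow_natCast, ← horder,
        pow_orderOf_eq_one, one_zpow]
    -- quotient
    have hcardQ : Nat.card (G ⧸ Z) ≤ n := by
      have heq := Subgroup.card_eq_card_quotient_mul_card_subgroup Z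
      have hp2 : 2 ≤ p := (Fact.out : p.Prime).two_le
      have hQpos : 0 < Nat.card (G ⧸ Z) := Nat.card_pos
      rw [hcardZ] at heq
      nlinarith
    have hQ : IsPGroup p (G ⧸ Z) := hG.to_quotient Z
    have hQlift : ∀ g : G ⧸ Z, ∃ h : G ⧸ Z, h ^ p = 1 ∧
        g⁻¹ * h ∈ Subgroup.closure {x : G ⧸ Z | ∃ g' : G ⧸ Z, x = g' ^ p} := by
      intro g
      obtain ⟨g, rfl⟩ := QuotientGroup.mk_surjective g
      obtain ⟨h, hh1, hh2⟩ := hlift g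
      refine ⟨(h : G ⧸ Z), ?_, ?_⟩
      · rw [← QuotientGroup.mk_pow, hh1]; rfl
      · have : ((g⁻¹ * h : G) : G ⧸ Z) ∈
            (Subgroup.closure {x : G | ∃ g' : G, x = g' ^ p}).map (QuotientGroup.mk' Z) :=
          Subgroup.mem_map_of_mem _ hh2
        rw [MonoidHom.map_closure] at this
        refine Subgroup.closure_mono ?_ this
        rintro x ⟨y, ⟨g', rfl⟩, rfl⟩
        exact ⟨(g' : G ⧸ Z), by simp⟩
    have hQbot := ih (G ⧸ Z) hcardQ hQ hQlift
    -- N ≤ Z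
    have hNZ : Subgroup.closure {x : G | ∃ g' : G, x = g' ^ p} ≤ Z := by
      intro x hx
      rw [← QuotientGroup.eq_one_iff]
      have : ((x : G) : G ⧸ Z) ∈
          (Subgroup.closure {x : G | ∃ g' : G, x = g' ^ p}).map (QuotientGroup.mk' Z) :=
        Subgroup.mem_map_of_mem _ hx
      rw [MonoidHom.map_closure] at this
      have h2 : ((x : G) : G ⧸ Z) ∈
          Subgroup.closure {x : G ⧸ Z | ∃ g' : G ⧸ Z, x = g' ^ p} := by
        refine Subgroup.closure_mono ?_ this
        rintro x ⟨y, ⟨g', rfl⟩, rfl⟩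
        exact ⟨(g' : G ⧸ Z), by simp⟩
      rw [hQbot] at h2
      exact h2
    -- now every p-th power is 1
    refine le_antisymm ?_ bot_le
    rw [← Subgroup.closure_singleton_one]
    apply Subgroup.closure_mono
    rintro x ⟨g, rfl⟩
    obtain ⟨h, hh1, hh2⟩ := hlift g
    have hmZ : g⁻¹ * h ∈ Z := hNZ hh2
    set m := g⁻¹ * h with hm
    have hgm : g = h * m⁻¹ := by rw [hm]; group
    have hcomm0 : Commute h m := Subgroup.mem_center_iff.mp (hZle hmZ) h
    have hcomm : Commute h m⁻¹ := hcomm0.inv_right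
    have : g ^ p = 1 := by
      rw [hgm, hcomm.mul_pow, hh1, one_mul, inv_pow, hZp m hmZ, inv_one]
    simp [this]

theorem pGroup_exponent_p_of_lifts (p : ℕ) [Fact p.Prime]
    (G : Type*) [Group G] [Finite G] (hG : IsPGroup p G)
    (hlift : ∀ g : G, ∃ h : G, h ^ p = 1 ∧
      g⁻¹ * h ∈ Subgroup.closure {x : G | ∃ g' : G, x = g' ^ p}) :
    Subgroup.closure {x : G | ∃ g' : G, x = g' ^ p} = ⊥ := by
  exact pg_aux p (Nat.card G) G le_rfl hG hlift
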